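/- Let f : F_2^n → Z_{2^k} be gbent with n even or k ≥ 3, and let f* : F_2^n → Z_{2^k} be its dual, i.e., H_f(u) = 2^{n/2} ζ^{f*(u)} for all u. Then f* is also gbent, and the dual of f* is f, i.e., H_{f*}(u) = 2^{n/2} ζ^{f(u)} for all u ∈ F_2^n. -/

import Mathlib

open scoped BigOperators

/-- `zeta q = e^{2πi/q}`, a primitive `q`-th root of unity. -/
noncomputable def zeta (q : ℕ) : ℂ := Complex.exp (2 * Real.pi * Complex.I / (q : ℂ))

/-- The generalized Walsh-Hadamard transform of `f : F_2^n → Z_q`. -/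
noncomputable def gwht (n q : ℕ) (f : (Fin n → ZMod 2) → ZMod q) (u : Fin n → ZMod 2) : ℂ :=
  ∑ x : Fin n → ZMod 2, zeta q ^ (f x).val * (-1 : ℂ) ^ (∑ i, u i * x i : ZMod 2).val

/-- `f` is gbent if `|H_f(u)| = 2^{n/2}` for all `u`. -/
def IsGbent (n q : ℕ) (f : (Fin n → ZMod 2) → ZMod q) : Prop :=
  ∀ u, ‖gwht n q f u‖ = Real.sqrt 2 ^ n

/-- Walsh-Hadamard transform of a Boolean function. -/
noncomputable def wht (n : ℕ) (g : (Fin n → ZMod 2) → ZMod 2) (u : Fin n → ZMod 2) : ℂ :=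
  ∑ x : Fin n → ZMod 2, (-1 : ℂ) ^ (g x + ∑ i, u i * x i : ZMod 2).val

/-- A Boolean function is bent if `|W_g(u)| = 2^{n/2}` for all `u`. -/
def IsBent (n : ℕ) (g : (Fin n → ZMod 2) → ZMod 2) : Prop :=
  ∀ u, ‖wht n g u‖ = Real.sqrt 2 ^ n

/-- A Boolean function is semibent if `|W_g(u)| ∈ {0, 2^{(n+1)/2}}` for all `u`. -/
def IsSemibent (n : ℕ) (g : (Fin n → ZMod 2) → ZMod 2) : Prop :=
  ∀ u, wht n g u = 0 ∨ ‖wht n g u‖ = 2 ^ ((n + 1) / 2)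


lemma abs_zeta (q : ℕ) : ‖zeta q‖ = 1 := by
  simp [zeta, Complex.norm_exp, Complex.div_re, Complex.mul_re, Complex.mul_im]

lemma neg_one_pow_add (a b : ZMod 2) :
    (-1:ℂ) ^ (a+b).val = (-1:ℂ) ^ a.val * (-1:ℂ) ^ b.val := by
  rw [ZMod.val_add, ← neg_one_pow_eq_pow_mod_two, pow_add]

lemma sum_zmod2 (g : ZMod 2 → ℂ) : ∑ b, g b = g 0 + g 1 :=
  Fin.sum_univ_two g

lemma neg_one_pow_sum {ι : Type*} (s : Finset ι) (g : ι → ZMod 2) :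
    (-1:ℂ) ^ (∑ i ∈ s, g i).val = ∏ i ∈ s, (-1:ℂ) ^ (g i).val := by
  induction s using Finset.cons_induction with
  | empty => simp
  | cons i s hi ih => rw [Finset.sum_cons, Finset.prod_cons, neg_one_pow_add, ih]

lemma orth (n : ℕ) (w : Fin n → ZMod 2) :
    ∑ x : Fin n → ZMod 2, (-1:ℂ) ^ (∑ i, w i * x i : ZMod 2).val
      = if w = 0 then (2:ℂ)^n else 0 := by
  have h1 : ∀ x : Fin n → ZMod 2, (-1:ℂ) ^ (∑ i, w i * x i : ZMod 2).val
      = ∏ i, (-1:ℂ) ^ ((w i * x i).val) := fun x => neg_one_pow_sum _ _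
  rw [Finset.sum_congr rfl fun x _ => h1 x]
  rw [← Fintype.piFinset_univ, ← Finset.prod_univ_sum (fun _ => (Finset.univ : Finset (ZMod 2))) (fun i b => (-1:ℂ) ^ ((w i * b).val))]
  have h2 : ∀ i, (∑ b : ZMod 2, (-1:ℂ) ^ ((w i * b).val))
      = if w i = 0 then 2 else 0 := by
    intro i
    rw [sum_zmod2]
    rcases (by decide : ∀ c : ZMod 2, c = 0 ∨ c = 1) (w i) with h | h <;>
      simp [h, ZMod.val_zero, ZMod.val_one] <;> norm_num
  rw [Finset.prod_congr rfl fun i _ => h2 i]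
  by_cases hw : w = 0
  · simp [hw]
  · obtain ⟨i, hi⟩ : ∃ i, w i ≠ 0 := by
      by_contra h; push_neg at h; exact hw (funext h)
    rw [if_neg hw]
    exact Finset.prod_eq_zero (Finset.mem_univ i) (by simp [hi])


lemma key (n q : ℕ) (f fstar : (Fin n → ZMod 2) → ZMod q)
    (hdual : ∀ u, gwht n q f u =
      ((Real.sqrt 2 ^ n : ℝ) : ℂ) * zeta q ^ (fstar u).val) (u : Fin n → ZMod 2) :
    gwht n q fstar u = ((Real.sqrt 2 ^ n : ℝ) : ℂ) * zeta q ^ (f u).val := by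
  set c : ℂ := ((Real.sqrt 2 ^ n : ℝ) : ℂ) with hc
  have hc0 : c ≠ 0 := by
    rw [hc]
    exact_mod_cast Complex.ofReal_ne_zero.mpr (by positivity)
  have hc2 : c * c = (2:ℂ)^n := by
    rw [hc, ← Complex.ofReal_mul, ← mul_pow, Real.mul_self_sqrt (by norm_num)]
    push_cast; ring
  have hz : ∀ x, zeta q ^ (fstar x).val = gwht n q f x / c := by
    intro x; rw [hdual x]; field_simp
  have hcomb : ∀ (x y : Fin n → ZMod 2),
      (-1:ℂ) ^ (∑ i, x i * y i : ZMod 2).val * (-1:ℂ) ^ (∑ i, u i * x i : ZMod 2).val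
      = (-1:ℂ) ^ (∑ i, ((y i + u i) * x i) : ZMod 2).val := by
    intro x y
    rw [← neg_one_pow_add]
    congr 1
    refine congrArg ZMod.val ?_
    rw [← Finset.sum_add_distrib]
    exact Finset.sum_congr rfl fun i _ => by ring
  have step1 : gwht n q fstar u
      = c⁻¹ * ∑ y : Fin n → ZMod 2, zeta q ^ (f y).val *
          ∑ x : Fin n → ZMod 2, (-1:ℂ) ^ (∑ i, ((y i + u i) * x i) : ZMod 2).val := by
    calc gwht n q fstar u
        = ∑ x : Fin n → ZMod 2,
            c⁻¹ * (gwht n q f x * (-1:ℂ) ^ (∑ i, u i * x i : ZMod 2).val) := by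
          rw [gwht]
          refine Finset.sum_congr rfl fun x _ => ?_
          rw [hz x]; ring
      _ = c⁻¹ * ∑ x : Fin n → ZMod 2, ∑ y : Fin n → ZMod 2,
            zeta q ^ (f y).val * (-1:ℂ) ^ (∑ i, ((y i + u i) * x i) : ZMod 2).val := by
          rw [← Finset.mul_sum]
          congr 1
          refine Finset.sum_congr rfl fun x _ => ?_
          simp only [gwht, Finset.sum_mul]
          refine Finset.sum_congr rfl fun y _ => ?_
          rw [mul_assoc, hcomb x y]
      _ = c⁻¹ * ∑ y : Fin n → ZMod 2, zeta q ^ (f y).val *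
            ∑ x : Fin n → ZMod 2, (-1:ℂ) ^ (∑ i, ((y i + u i) * x i) : ZMod 2).val := by
          rw [Finset.sum_comm]
          congr 1
          exact Finset.sum_congr rfl fun y _ => (Finset.mul_sum _ _ _).symm
  rw [step1]
  have step2 : ∀ y : Fin n → ZMod 2,
      (∑ x : Fin n → ZMod 2, (-1:ℂ) ^ (∑ i, ((y i + u i) * x i) : ZMod 2).val)
        = if y = u then (2:ℂ)^n else 0 := by
    intro y
    rw [orth n (fun i => y i + u i)]
    congr 1
    simp only [eq_iff_iff]
    have hab : ∀ a b : ZMod 2, a + b = 0 ↔ a = b := by decide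
    constructor
    · intro h; funext i
      exact (hab _ _).mp (congrFun h i)
    · intro h; subst h; funext i
      exact (hab _ _).mpr rfl
  rw [Finset.sum_congr rfl fun y _ => by rw [step2 y]]
  simp only [mul_ite, mul_zero]
  rw [Finset.sum_ite_eq' Finset.univ u fun y => zeta q ^ (f y).val * (2:ℂ)^n]
  simp only [Finset.mem_univ, if_true]
  rw [← hc2]
  field_simp


theorem statement_2 (n k : ℕ) (hn : 1 ≤ n) (hk : 1 ≤ k) (hnk : Even n ∨ 3 ≤ k)
    (f fstar : (Fin n → ZMod 2) → ZMod (2 ^ k)) (hf : IsGbent n (2 ^ k) f)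
    (hdual : ∀ u, gwht n (2 ^ k) f u =
      ((Real.sqrt 2 ^ n : ℝ) : ℂ) * zeta (2 ^ k) ^ (fstar u).val) :
    IsGbent n (2 ^ k) fstar ∧
      ∀ u, gwht n (2 ^ k) fstar u =
        ((Real.sqrt 2 ^ n : ℝ) : ℂ) * zeta (2 ^ k) ^ (f u).val := by
  have key' := key n (2 ^ k) f fstar hdual
  refine ⟨fun v => ?_, key'⟩
  rw [key' v, norm_mul, norm_pow, abs_zeta, one_pow, mul_one,
    Complex.norm_real, Real.norm_eq_abs, abs_of_nonneg (by positivity)]
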